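/- Let x₁, x₂, x₃ be elements of a complex unital Banach algebra A satisfying x₁x₂ + x₁x₃ + x₂x₃ = α₁·1 + α₂(x₁ + x₂ + x₃) and x₁x₂x₃ = β(x₁ + x₂ + x₃), where α₁, α₂, β ∈ ℂ and β ≠ 0. If x₁, x₂, x₃ are all generalized Drazin invertible, then x₁ + x₂ + x₃ is generalized Drazin invertible. -/

import Mathlib

set_option linter.unusedSectionVars false
set_option maxHeartbeats 1000000

/-- `b` is a generalized Drazin inverse of `a`: `a` commutes with `b`, `b` is inner-inverse
to itself relative to `a`, and `a * (1 - a * b)` is quasinilpotent (spectral radius zero). -/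
def IsGDrazinInverse {A : Type*} [NormedRing A] [NormedAlgebra ℂ A] (a b : A) : Prop :=
  a * b = b * a ∧ b * a * b = b ∧ spectralRadius ℂ (a * (1 - a * b)) = 0

/-- `a` is generalized Drazin invertible. -/
def GDrazinInvertible {A : Type*} [NormedRing A] [NormedAlgebra ℂ A] (a : A) : Prop :=
  ∃ b : A, IsGDrazinInverse a b

open Metric Complex MeasureTheory Set Function




section Helpers
variable {A : Type*} [NormedRing A] [NormedAlgebra ℂ A] [CompleteSpace A]

lemma commute_ringInverse {a b : A} (h : Commute a b) : Commute a (Ring.inverse b) := by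
  by_cases hb : IsUnit b
  · obtain ⟨u, rfl⟩ := hb
    rw [Ring.inverse_unit]
    exact h.units_inv_right
  · rw [Ring.inverse_non_unit _ hb]; exact Commute.zero_right a

lemma isUnit_smul_one_sub_of_spectralRadius_zero {a : A} (h : spectralRadius ℂ a = 0)
    {μ : ℂ} (hμ : μ ≠ 0) : IsUnit (μ • (1 : A) - a) := by
  rw [← Algebra.algebraMap_eq_smul_one]
  by_contra hc
  have hmem : μ ∈ spectrum ℂ a := spectrum.mem_iff.mpr hc
  have : (‖μ‖₊ : ENNReal) ≤ spectralRadius ℂ a := by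
    exact le_iSup₂ (f := fun k (_ : k ∈ spectrum ℂ a) => (‖k‖₊ : ENNReal)) μ hmem
  rw [h, nonpos_iff_eq_zero] at this
  simp only [ENNReal.coe_eq_zero, nnnorm_eq_zero] at this
  exact hμ this

lemma spectralRadius_eq_zero_of_forall_isUnit {a : A}
    (h : ∀ μ : ℂ, μ ≠ 0 → IsUnit (μ • (1 : A) - a)) : spectralRadius ℂ a = 0 := by
  refine le_antisymm ?_ zero_le
  refine iSup₂_le fun μ hμ => ?_
  rcases eq_or_ne μ 0 with rfl | hμ0
  · simp
  · exact absurd (spectrum.mem_iff.mp hμ)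
      (not_not.mpr (by simpa [Algebra.algebraMap_eq_smul_one] using h μ hμ0))
end Helpers


section Fwd
variable {A : Type*} [NormedRing A] [NormedAlgebra ℂ A] [CompleteSpace A]


lemma isolated_of_gdrazin {a b : A} (hab : a * b = b * a) (hbab : b * a * b = b)
    (hq : ∀ μ : ℂ, μ ≠ 0 → IsUnit (μ • (1 : A) - a * (1 - a * b))) :
    ∀ μ : ℂ, μ ≠ 0 → ‖μ‖ * ‖b‖ < 1 → IsUnit (μ • (1 : A) - a) := by
  intro μ hμ hμb
  set p : A := 1 - a * b with hp
  have hC : Commute a b := hab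
  have habab : a * b * (a * b) = a * b := by
    rw [mul_assoc, ← mul_assoc b a b, hbab]
  have habb : a * b * b = b := by rw [hab]; exact hbab
  have hpp : p * p = p := by
    simp only [hp, sub_mul, mul_sub, one_mul, mul_one, habab]; abel
  have hCp : Commute a p := (Commute.one_right a).sub_right ((Commute.refl a).mul_right hC)
  have hCbp : Commute b p := (Commute.one_right b).sub_right (hC.symm.mul_right (Commute.refl b))
  -- the unit 1 - μ • b
  have hnorm : ‖μ • b‖ < 1 := by rwa [norm_smul]
  set u : Aˣ := Units.oneSub (μ • b) hnorm with hu
  have huval : (u : A) = 1 - μ • b := rfl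
  set iu : A := ↑u⁻¹ with hiu
  have hui : (1 - μ • b) * iu = 1 := by rw [← huval, hiu, Units.mul_inv]
  have hiuRI : Ring.inverse ((1:A) - μ • b) = iu := by rw [← huval, Ring.inverse_unit]
  -- the unit μ•1 - a*p
  have hv : IsUnit (μ • (1:A) - a * p) := hq μ hμ
  set z : A := Ring.inverse (μ • (1:A) - a * p) with hz
  have hzv : z * (μ • (1:A) - a * p) = 1 := Ring.inverse_mul_cancel _ hv
  -- commutation
  have hCaz : Commute a z := commute_ringInverse
    (((Commute.one_right a).smul_right μ).sub_right ((Commute.refl a).mul_right hCp))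
  have hCpz : Commute p z := commute_ringInverse
    (((Commute.one_right p).smul_right μ).sub_right ((hCp.symm).mul_right (Commute.refl p)))
  have hCaiu : Commute a iu := hiuRI ▸ commute_ringInverse
    ((Commute.one_right a).sub_right (hC.smul_right μ))
  have hCbiu : Commute b iu := hiuRI ▸ commute_ringInverse
    ((Commute.one_right b).sub_right ((Commute.refl b).smul_right μ))
  set w : A := z * p - b * iu with hw
  have hCmw : Commute (μ • (1:A) - a) w := by
    have haw : Commute a w := (hCaz.mul_right hCp).sub_right (hC.mul_right hCaiu)
    exact (((Commute.one_left w).smul_left μ).sub_left haw)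
  have key1 : (μ • (1:A) - a) * (z * p) = p := by
    have hzma : Commute (μ • (1:A) - a) z :=
      ((Commute.one_left z).smul_left μ).sub_left hCaz.symm.symm
    have h1 : (μ • (1:A) - a) * p = (μ • (1:A) - a * p) * p := by
      simp only [sub_mul, smul_mul_assoc, one_mul, mul_assoc, hpp]
    calc (μ • (1:A) - a) * (z * p) = ((μ • (1:A) - a) * z) * p := (mul_assoc _ _ _).symm
      _ = (z * (μ • (1:A) - a)) * p := by rw [hzma.eq]
      _ = z * ((μ • (1:A) - a) * p) := mul_assoc _ _ _
      _ = z * ((μ • (1:A) - a * p) * p) := by rw [h1]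
      _ = (z * (μ • (1:A) - a * p)) * p := (mul_assoc _ _ _).symm
      _ = p := by rw [hzv, one_mul]
  have key2 : (μ • (1:A) - a) * (b * iu) = -(a*b) := by
    have hstep : (μ • (1:A) - a) * b = -((a*b) * (1 - μ • b)) := by
      simp only [sub_mul, mul_sub, smul_mul_assoc, mul_smul_comm, one_mul, mul_one, habb]
      abel
    calc (μ • (1:A) - a) * (b * iu) = ((μ • (1:A) - a) * b) * iu := (mul_assoc _ _ _).symm
      _ = -((a*b) * ((1 - μ • b) * iu)) := by rw [hstep, neg_mul, mul_assoc]
      _ = -(a*b) := by rw [hui, mul_one]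
  have right : (μ • (1:A) - a) * w = 1 := by
    rw [hw, mul_sub, key1, key2, hp]; abel
  exact ⟨⟨μ • (1:A) - a, w, right, by rw [← hCmw.eq]; exact right⟩, rfl⟩
end Fwd


section Integrals
variable {A : Type*} [NormedRing A] [NormedAlgebra ℂ A] [CompleteSpace A]

lemma mul_circleIntegral {f : ℂ → A} {c : ℂ} {R' : ℝ} (hf : CircleIntegrable f c R') (a : A) :
    a * (∮ z in C(c, R'), f z) = ∮ z in C(c, R'), a * f z := by
  have h := (ContinuousLinearMap.mul ℂ A a).intervalIntegral_comp_comm hf.out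
  simp only [_root_.map_smul, ContinuousLinearMap.mul_apply'] at h
  simp only [circleIntegral]
  exact h.symm

lemma circleIntegral_mul {f : ℂ → A} {c : ℂ} {R' : ℝ} (hf : CircleIntegrable f c R') (a : A) :
    (∮ z in C(c, R'), f z) * a = ∮ z in C(c, R'), f z * a := by
  have h := ((ContinuousLinearMap.mul ℂ A).flip a).intervalIntegral_comp_comm hf.out
  simp only [_root_.map_smul, ContinuousLinearMap.flip_apply, ContinuousLinearMap.mul_apply'] at h
  simp only [circleIntegral]
  exact h.symm

lemma circleIntegral_swap {F : ℂ → ℂ → A} {r₁ r₂ : ℝ}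
    (hF : Continuous fun q : ℝ × ℝ => F (circleMap 0 r₁ q.1) (circleMap 0 r₂ q.2)) :
    (∮ z in C(0,r₁), ∮ w in C(0,r₂), F z w) = ∮ w in C(0,r₂), ∮ z in C(0,r₁), F z w := by
  set G : ℝ → ℝ → A := fun θ φ => deriv (circleMap 0 r₁) θ •
    deriv (circleMap 0 r₂) φ • F (circleMap 0 r₁ θ) (circleMap 0 r₂ φ) with hG
  have hGc : Continuous (uncurry G) := by
    simp only [hG, uncurry, deriv_circleMap]
    exact (((continuous_circleMap 0 r₁).comp continuous_fst).mul continuous_const).smul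
      ((((continuous_circleMap 0 r₂).comp continuous_snd).mul continuous_const).smul hF)
  have key : (∫ θ in (0:ℝ)..(2*Real.pi), ∫ φ in (0:ℝ)..(2*Real.pi), G θ φ)
      = ∫ φ in (0:ℝ)..(2*Real.pi), ∫ θ in (0:ℝ)..(2*Real.pi), G θ φ := by
    simp only [intervalIntegral.integral_of_le Real.two_pi_pos.le]
    refine MeasureTheory.integral_integral_swap ?_
    rw [Measure.prod_restrict]
    exact (hGc.continuousOn.integrableOn_compact (isCompact_Icc.prod isCompact_Icc)).mono_set
      (Set.prod_mono Ioc_subset_Icc_self Ioc_subset_Icc_self)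
  simp only [circleIntegral]
  calc (∫ θ in (0:ℝ)..(2*Real.pi), deriv (circleMap 0 r₁) θ •
          ∫ φ in (0:ℝ)..(2*Real.pi), deriv (circleMap 0 r₂) φ • F (circleMap 0 r₁ θ) (circleMap 0 r₂ φ))
      = ∫ θ in (0:ℝ)..(2*Real.pi), ∫ φ in (0:ℝ)..(2*Real.pi), G θ φ := by
        simp only [← intervalIntegral.integral_smul, hG]
    _ = ∫ φ in (0:ℝ)..(2*Real.pi), ∫ θ in (0:ℝ)..(2*Real.pi), G θ φ := key
    _ = ∫ φ in (0:ℝ)..(2*Real.pi), deriv (circleMap 0 r₂) φ •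
          ∫ θ in (0:ℝ)..(2*Real.pi), deriv (circleMap 0 r₁) θ • F (circleMap 0 r₁ θ) (circleMap 0 r₂ φ) := by
        simp only [← intervalIntegral.integral_smul, hG]
        congr 1
        ext φ
        congr 1
        ext θ
        rw [smul_comm]

lemma circleIntegral_mul_circleIntegral_comm {f g : ℂ → A} {r₁ r₂ : ℝ}
    (hf : CircleIntegrable f 0 r₁) (hg : CircleIntegrable g 0 r₂)
    (hcomm : ∀ z w, f z * g w = g w * f z)
    (hF : Continuous fun q : ℝ × ℝ => f (circleMap 0 r₁ q.1) * g (circleMap 0 r₂ q.2)) :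
    (∮ z in C(0,r₁), f z) * (∮ w in C(0,r₂), g w) =
      (∮ w in C(0,r₂), g w) * (∮ z in C(0,r₁), f z) := by
  have h1 : (∮ z in C(0,r₁), f z) * (∮ w in C(0,r₂), g w)
      = ∮ w in C(0,r₂), ∮ z in C(0,r₁), f z * g w := by
    rw [mul_circleIntegral hg]
    congr 1
    ext w
    rw [circleIntegral_mul hf]
  have h2 : (∮ w in C(0,r₂), g w) * (∮ z in C(0,r₁), f z)
      = ∮ z in C(0,r₁), ∮ w in C(0,r₂), g w * f z := by
    rw [mul_circleIntegral hf]
    congr 1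
    ext z
    rw [circleIntegral_mul hg]
  rw [h1, h2]
  rw [← circleIntegral_swap (F := fun z w => f z * g w) hF]
  simp only [hcomm]
end Integrals


section Res
variable {A : Type*} [NormedRing A] [NormedAlgebra ℂ A] [CompleteSpace A]


lemma resolvent_def' (s : A) (z : ℂ) : resolvent s z = Ring.inverse (algebraMap ℂ A z - s) := rfl

lemma commute_resolvent_self (s : A) (z : ℂ) : Commute s (resolvent s z) :=
  commute_ringInverse
    (Commute.sub_right ((Algebra.commutes z s).symm : Commute s (algebraMap ℂ A z)) (Commute.refl s))

lemma commute_resolvent (s : A) (z w : ℂ) : Commute (resolvent s z) (resolvent s w) := by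
  have h : Commute (algebraMap ℂ A z - s) (algebraMap ℂ A w - s) :=
    Commute.sub_right ((Algebra.commutes w (algebraMap ℂ A z - s)).symm)
      (Commute.sub_left (Algebra.commutes z s) (Commute.refl s))
  exact ((commute_ringInverse (commute_ringInverse h).symm).symm : _)

lemma commute_resolvent_sub (s : A) (μ z : ℂ) : Commute (μ • (1:A) - s) (resolvent s z) :=
  Commute.sub_left ((Commute.one_left _).smul_left μ) (commute_resolvent_self s z)

lemma resolvent_mul {s : A} {z : ℂ} (hz : z ∈ resolventSet ℂ s) :
    (z • (1:A) - s) * resolvent s z = 1 := by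
  rw [← Algebra.algebraMap_eq_smul_one, resolvent_def']
  exact Ring.mul_inverse_cancel _ hz

lemma mul_resolvent {s : A} {z : ℂ} (hz : z ∈ resolventSet ℂ s) :
    resolvent s z * (z • (1:A) - s) = 1 := by
  rw [← Algebra.algebraMap_eq_smul_one, resolvent_def']
  exact Ring.inverse_mul_cancel _ hz

lemma smul_sub_mul_resolvent {s : A} {z : ℂ} (μ : ℂ) (hz : z ∈ resolventSet ℂ s) :
    (μ • (1:A) - s) * resolvent s z = (μ - z) • resolvent s z + 1 := by
  have h : μ • (1:A) - s = (μ - z) • (1:A) + (z • (1:A) - s) := by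
    rw [sub_smul]; abel
  rw [h, add_mul, smul_mul_assoc, one_mul, resolvent_mul hz]

lemma resolvent_sub_resolvent {s : A} {z w : ℂ} (hz : z ∈ resolventSet ℂ s)
    (hw : w ∈ resolventSet ℂ s) :
    resolvent s z - resolvent s w = (w - z) • (resolvent s z * resolvent s w) := by
  have h1 : resolvent s z * ((w • (1:A) - s) * resolvent s w) = resolvent s z := by
    rw [resolvent_mul hw, mul_one]
  have h2 : (resolvent s z * (z • (1:A) - s)) * resolvent s w = resolvent s w := by
    rw [mul_resolvent hz, one_mul]
  calc resolvent s z - resolvent s w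
      = resolvent s z * ((w • (1:A) - s) * resolvent s w)
        - (resolvent s z * (z • (1:A) - s)) * resolvent s w := by rw [h1, h2]
    _ = resolvent s z * ((w • (1:A) - s) * resolvent s w)
        - resolvent s z * ((z • (1:A) - s) * resolvent s w) := by rw [mul_assoc]
    _ = resolvent s z * (((w • (1:A) - s) - (z • (1:A) - s)) * resolvent s w) := by
        rw [← mul_sub, ← sub_mul]
    _ = resolvent s z * (((w - z) • (1:A)) * resolvent s w) := by
        congr 2
        rw [sub_smul]; abel
    _ = (w - z) • (resolvent s z * resolvent s w) := by
        rw [smul_mul_assoc, one_mul, mul_smul_comm]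

lemma resolvent_mul_resolvent {s : A} {z w : ℂ} (hz : z ∈ resolventSet ℂ s)
    (hw : w ∈ resolventSet ℂ s) (hzw : z ≠ w) :
    resolvent s z * resolvent s w = (w - z)⁻¹ • (resolvent s z - resolvent s w) := by
  rw [resolvent_sub_resolvent hz hw, smul_smul,
    inv_mul_cancel₀ (sub_ne_zero.mpr (Ne.symm hzw)), one_smul]

lemma continuousOn_resolvent (s : A) : ContinuousOn (resolvent s) (resolventSet ℂ s) :=
  fun _ hz => ((spectrum.hasDerivAt_resolvent hz).differentiableAt).continuousAt.continuousWithinAt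

lemma circleIntegral_add {f g : ℂ → A} {c : ℂ} {R : ℝ} (hf : CircleIntegrable f c R)
    (hg : CircleIntegrable g c R) :
    (∮ z in C(c, R), (f z + g z)) = (∮ z in C(c, R), f z) + ∮ z in C(c, R), g z := by
  simp only [circleIntegral, smul_add, intervalIntegral.integral_add hf.out hg.out]

end Res

section Koliha
variable {A : Type*} [NormedRing A] [NormedAlgebra ℂ A] [CompleteSpace A]

theorem gdrazin_of_isolated {s : A} {r₀ : ℝ} (hr₀ : 0 < r₀)
    (H : ∀ z : ℂ, z ≠ 0 → ‖z‖ < r₀ → z ∈ resolventSet ℂ s) :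
    ∃ b : A, s * b = b * s ∧ b * s * b = b ∧
      ∀ μ : ℂ, μ ≠ 0 → IsUnit (μ • (1:A) - s * (1 - s * b)) := by
  set T : ℂ := 2 * Real.pi * I with hTdef
  have hT : T ≠ 0 := by
    simp only [hTdef]
    exact Complex.two_pi_I_ne_zero
  -- membership facts
  have hsph0 : ∀ {r : ℝ}, 0 < r → ∀ z ∈ sphere (0:ℂ) r, z ≠ 0 := by
    intro r h0 z hz
    rw [mem_sphere_zero_iff_norm] at hz
    intro h
    rw [h, norm_zero] at hz
    exact h0.ne' hz.symm
  have hsphere : ∀ {r : ℝ}, 0 < r → r < r₀ → ∀ z ∈ sphere (0:ℂ) r, z ∈ resolventSet ℂ s := by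
    intro r h0 hlt z hz
    have hn := mem_sphere_zero_iff_norm.mp hz
    exact H z (hsph0 h0 z hz) (by rw [hn]; exact hlt)
  -- continuity / integrability
  have hcontR : ∀ {r : ℝ}, 0 < r → r < r₀ → ContinuousOn (resolvent s) (sphere (0:ℂ) r) :=
    fun h0 hlt => (continuousOn_resolvent s).mono (fun z hz => hsphere h0 hlt z hz)
  have hciR : ∀ {r : ℝ}, 0 < r → r < r₀ → CircleIntegrable (resolvent s) 0 r :=
    fun h0 hlt => (hcontR h0 hlt).circleIntegrable h0.le
  have hciSmul : ∀ {g : ℂ → ℂ} {r : ℝ}, 0 < r → r < r₀ → ContinuousOn g (sphere (0:ℂ) r) →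
      CircleIntegrable (fun z => g z • resolvent s z) 0 r :=
    fun h0 hlt hg => (hg.smul (hcontR h0 hlt)).circleIntegrable h0.le
  have hcinv : ∀ {r : ℝ}, 0 < r → ContinuousOn (fun z : ℂ => z⁻¹) (sphere (0:ℂ) r) :=
    fun h0 => ContinuousOn.inv₀ continuousOn_id (fun z hz => hsph0 h0 z hz)
  have hcsub : ∀ {r : ℝ} (w : ℂ), ‖w‖ ≠ r →
      ContinuousOn (fun z : ℂ => (w - z)⁻¹) (sphere (0:ℂ) r) := by
    intro r w hw
    refine ContinuousOn.inv₀ (continuousOn_const.sub continuousOn_id) (fun z hz => ?_)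
    have hn := mem_sphere_zero_iff_norm.mp hz
    exact sub_ne_zero.mpr (fun h => hw (h ▸ hn))
  -- scalar circle integrals
  have hint_inv : ∀ {r : ℝ}, 0 < r → (∮ z in C(0, r), z⁻¹) = T := by
    intro r h0
    have := circleIntegral.integral_sub_center_inv (0:ℂ) (R := r) h0.ne'
    simpa [hTdef] using this
  have hint_in : ∀ {r : ℝ} {w : ℂ}, ‖w‖ < r → (∮ z in C(0, r), (z - w)⁻¹) = T := by
    intro r w hw
    have := circleIntegral.integral_sub_inv_of_mem_ball (c := 0) (w := w) (R := r)
      (by simpa [mem_ball, dist_eq_norm] using hw)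
    simpa [hTdef] using this
  have hint_out : ∀ {r : ℝ} {w : ℂ}, 0 ≤ r → r < ‖w‖ → (∮ z in C(0, r), (w - z)⁻¹) = 0 := by
    intro r w h0 hw
    refine Complex.circleIntegral_eq_zero_of_differentiable_on_off_countable h0
      countable_empty ?_ ?_
    · refine ContinuousOn.inv₀ (continuousOn_const.sub continuousOn_id) (fun z hz => ?_)
      rw [mem_closedBall, dist_zero_right] at hz
      exact sub_ne_zero.mpr (fun h => absurd (h ▸ hz) (not_le.mpr hw))
    · intro z hz
      rw [mem_diff, mem_ball, dist_zero_right] at hz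
      exact ((differentiableAt_const w).sub differentiableAt_id).inv
        (sub_ne_zero.mpr (fun h => absurd ((show w = z from h) ▸ hz.1.le) (not_le.mpr hw)))
  -- annulus invariance
  have hannulus : ∀ {g : ℂ → ℂ}, (∀ z : ℂ, z ≠ 0 → DifferentiableAt ℂ g z) →
      ∀ {r₁ r₂ : ℝ}, 0 < r₁ → r₁ ≤ r₂ → r₂ < r₀ →
      (∮ z in C(0,r₂), g z • resolvent s z) = ∮ z in C(0,r₁), g z • resolvent s z := by
    intro g hg r₁ r₂ h1 h12 h2
    have hset : ∀ z ∈ closedBall (0:ℂ) r₂ \ ball 0 r₁, z ≠ 0 ∧ z ∈ resolventSet ℂ s := by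
      intro z hz
      rw [mem_diff, mem_closedBall, dist_zero_right, mem_ball, dist_zero_right, not_lt] at hz
      have hz0 : z ≠ 0 := fun h => by
        rw [h, norm_zero] at hz
        exact absurd hz.2 (not_le.mpr h1)
      exact ⟨hz0, H z hz0 (lt_of_le_of_lt hz.1 h2)⟩
    refine Complex.circleIntegral_eq_of_differentiable_on_annulus_off_countable h1 h12
      countable_empty ?_ ?_
    · intro z hz
      obtain ⟨hz0, hzr⟩ := hset z hz
      exact (((hg z hz0).continuousAt.continuousWithinAt).smul
        (((continuousOn_resolvent s) z hzr).mono (fun y hy => (hset y hy).2)))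
    · intro z hz
      obtain ⟨hz0, hzr⟩ := hset z ⟨ball_subset_closedBall hz.1.1, fun h => hz.1.2 (ball_subset_closedBall h)⟩
      exact (hg z hz0).smul (spectrum.hasDerivAt_resolvent hzr).differentiableAt

  -- radius independence
  have hPind : ∀ {r₁ r₂ : ℝ}, 0 < r₁ → 0 < r₂ → r₁ < r₀ → r₂ < r₀ →
      (∮ z in C(0,r₁), resolvent s z) = ∮ z in C(0,r₂), resolvent s z := by
    have key : ∀ {u v : ℝ}, 0 < u → u ≤ v → v < r₀ →
        (∮ z in C(0,v), resolvent s z) = ∮ z in C(0,u), resolvent s z := by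
      intro u v hu huv hv
      have := hannulus (g := fun _ => (1:ℂ)) (fun z _ => differentiableAt_const _) hu huv hv
      simpa using this
    intro r₁ r₂ h1 h2 h1' h2'
    rcases le_total r₁ r₂ with h | h
    · exact (key h1 h h2').symm
    · exact key h2 h h1'
  have hBind : ∀ {r₁ r₂ : ℝ}, 0 < r₁ → 0 < r₂ → r₁ < r₀ → r₂ < r₀ →
      (∮ z in C(0,r₁), z⁻¹ • resolvent s z) = ∮ z in C(0,r₂), z⁻¹ • resolvent s z := by
    have key : ∀ {u v : ℝ}, 0 < u → u ≤ v → v < r₀ →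
        (∮ z in C(0,v), z⁻¹ • resolvent s z) = ∮ z in C(0,u), z⁻¹ • resolvent s z :=
      fun hu huv hv => hannulus (g := fun z => z⁻¹)
        (fun z hz => differentiableAt_inv hz) hu huv hv
    intro r₁ r₂ h1 h2 h1' h2'
    rcases le_total r₁ r₂ with h | h
    · exact (key h1 h h2').symm
    · exact key h2 h h1'
  -- more continuity helpers
  have hcsub2 : ∀ {r : ℝ} (z : ℂ), ‖z‖ ≠ r →
      ContinuousOn (fun w : ℂ => (w - z)⁻¹) (sphere (0:ℂ) r) := by
    intro r z hz
    refine ContinuousOn.inv₀ (continuousOn_id.sub continuousOn_const) (fun w hw => ?_)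
    have hn := mem_sphere_zero_iff_norm.mp hw
    exact sub_ne_zero.mpr (fun h => hz (by rw [← h]; exact hn))
  have hcontRcirc : ∀ {r : ℝ}, 0 < r → r < r₀ →
      Continuous fun θ : ℝ => resolvent s (circleMap 0 r θ) := by
    intro r h0 hlt
    rw [continuous_iff_continuousAt]
    intro θ
    have hz := hsphere h0 hlt _ (circleMap_mem_sphere (0:ℂ) h0.le θ)
    exact (((spectrum.hasDerivAt_resolvent hz).differentiableAt).continuousAt).comp
      (continuous_circleMap 0 r).continuousAt
  have hcircne : ∀ {u v : ℝ}, 0 < u → 0 < v → u ≠ v → ∀ (θ φ : ℝ),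
      circleMap 0 u θ - circleMap 0 v φ ≠ 0 := by
    intro u v hu hv huv θ φ h
    rw [sub_eq_zero] at h
    have := congrArg norm h
    rw [norm_circleMap_zero, norm_circleMap_zero, abs_of_pos hu, abs_of_pos hv] at this
    exact huv this
  have hzero : ∀ (r : ℝ), (∮ _ in C(0,r), (0:A)) = 0 := by
    intro r; simp [circleIntegral]
  -- radii
  have hrb0 : (0:ℝ) < r₀/3 := by positivity
  have hrc0 : (0:ℝ) < r₀/2 := by positivity
  have hrbc : r₀/3 < r₀/2 := by linarith
  have hrbr : r₀/3 < r₀ := by linarith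
  have hrcr : r₀/2 < r₀ := by linarith
  set rb : ℝ := r₀/3
  set rc : ℝ := r₀/2
  -- s * BInt
  have hsB : ∀ {r : ℝ}, 0 < r → r < r₀ →
      s * (∮ z in C(0,r), z⁻¹ • resolvent s z) = (∮ z in C(0,r), resolvent s z) - T • 1 := by
    intro r h0 hlt
    rw [mul_circleIntegral (hciSmul h0 hlt (hcinv h0)) s]
    have congr1 : EqOn (fun z : ℂ => s * (z⁻¹ • resolvent s z))
        (fun z : ℂ => resolvent s z - z⁻¹ • (1:A)) (sphere 0 r) := by
      intro z hz
      have hz0 := hsph0 h0 z hz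
      have hzr := hsphere h0 hlt z hz
      have h1 : s * resolvent s z = z • resolvent s z - 1 := by
        calc s * resolvent s z
            = z • resolvent s z - (z • (1:A) - s) * resolvent s z := by
              rw [sub_mul, smul_mul_assoc, one_mul]; abel
          _ = z • resolvent s z - 1 := by rw [resolvent_mul hzr]
      simp only
      rw [mul_smul_comm, h1, smul_sub, smul_smul, inv_mul_cancel₀ hz0, one_smul]
    rw [circleIntegral.integral_congr h0.le congr1,
      circleIntegral.integral_sub (g := fun z => z⁻¹ • (1:A)) (hciR h0 hlt)
        (((hcinv h0).smul continuousOn_const).circleIntegrable h0.le),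
      circleIntegral.integral_smul_const (fun z : ℂ => z⁻¹) (1:A) 0 r, hint_inv h0]
  have hBs : ∀ {r : ℝ}, 0 < r → r < r₀ →
      (∮ z in C(0,r), z⁻¹ • resolvent s z) * s = s * ∮ z in C(0,r), z⁻¹ • resolvent s z := by
    intro r h0 hlt
    rw [circleIntegral_mul (hciSmul h0 hlt (hcinv h0)) s,
      mul_circleIntegral (hciSmul h0 hlt (hcinv h0)) s]
    congr 1
    funext z
    rw [smul_mul_assoc, mul_smul_comm, (commute_resolvent_self s z).eq]
  have hPs : ∀ {r : ℝ}, 0 < r → r < r₀ →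
      (∮ z in C(0,r), resolvent s z) * s = s * ∮ z in C(0,r), resolvent s z := by
    intro r h0 hlt
    rw [circleIntegral_mul (hciR h0 hlt) s, mul_circleIntegral (hciR h0 hlt) s]
    congr 1
    funext z
    rw [(commute_resolvent_self s z).eq]
  -- P idempotent (unscaled)
  have hPP : (∮ z in C(0,rb), resolvent s z) * (∮ w in C(0,rc), resolvent s w)
      = T • ∮ z in C(0,rb), resolvent s z := by
    set X := ∮ w in C(0,rc), resolvent s w with hX
    have hmul : (∮ z in C(0,rb), resolvent s z) * X = ∮ z in C(0,rb), resolvent s z * X :=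
      circleIntegral_mul (hciR hrb0 hrbr) X
    have hinner : ∀ z ∈ sphere (0:ℂ) rb, resolvent s z * X
        = T • resolvent s z - ∮ w in C(0,rc), (w - z)⁻¹ • resolvent s w := by
      intro z hz
      have hzr := hsphere hrb0 hrbr z hz
      have hzn := mem_sphere_zero_iff_norm.mp hz
      have hznrc : ‖z‖ ≠ rc := by rw [hzn]; exact hrbc.ne
      have h1 : resolvent s z * X = ∮ w in C(0,rc), resolvent s z * resolvent s w :=
        mul_circleIntegral (hciR hrc0 hrcr) _
      have h2 : EqOn (fun w => resolvent s z * resolvent s w)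
          (fun w => (w - z)⁻¹ • resolvent s z - (w - z)⁻¹ • resolvent s w) (sphere 0 rc) := by
        intro w hw
        have hwr := hsphere hrc0 hrcr w hw
        have hwn := mem_sphere_zero_iff_norm.mp hw
        have hzw : z ≠ w := by
          intro h
          rw [← h, hzn] at hwn
          exact hrbc.ne hwn
        simp only
        rw [resolvent_mul_resolvent hzr hwr hzw, smul_sub]
      rw [h1, circleIntegral.integral_congr hrc0.le h2,
        circleIntegral.integral_sub (f := fun w => (w - z)⁻¹ • resolvent s z)
          (((hcsub2 z hznrc).smul continuousOn_const).circleIntegrable hrc0.le)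
          (hciSmul hrc0 hrcr (hcsub2 z hznrc)),
        circleIntegral.integral_smul_const (fun w : ℂ => (w - z)⁻¹) (resolvent s z) 0 rc,
        hint_in (show ‖z‖ < rc by rw [hzn]; exact hrbc)]
    have hJ : (∮ z in C(0,rb), ∮ w in C(0,rc), (w - z)⁻¹ • resolvent s w) = 0 := by
      have hcont : Continuous fun q : ℝ × ℝ =>
          (circleMap 0 rc q.2 - circleMap 0 rb q.1)⁻¹ • resolvent s (circleMap 0 rc q.2) := by
        refine Continuous.smul (Continuous.inv₀
          (((continuous_circleMap 0 rc).comp continuous_snd).sub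
            ((continuous_circleMap 0 rb).comp continuous_fst))
          (fun q => hcircne hrc0 hrb0 hrbc.ne' q.2 q.1))
          ((hcontRcirc hrc0 hrcr).comp continuous_snd)
      rw [circleIntegral_swap (F := fun z w => (w - z)⁻¹ • resolvent s w) hcont]
      have hz0 : ∀ w ∈ sphere (0:ℂ) rc,
          (∮ z in C(0,rb), (w - z)⁻¹ • resolvent s w) = (0:A) := by
        intro w hw
        have hwn := mem_sphere_zero_iff_norm.mp hw
        rw [circleIntegral.integral_smul_const (fun z : ℂ => (w - z)⁻¹) (resolvent s w) 0 rb,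
          hint_out hrb0.le (by rw [hwn]; exact hrbc), zero_smul]
      rw [circleIntegral.integral_congr hrc0.le hz0, hzero]
    have hCrw : EqOn (fun z => ∮ w in C(0,rc), (w - z)⁻¹ • resolvent s w)
        (fun z => T • resolvent s z - resolvent s z * X) (sphere 0 rb) := by
      intro z hz
      simp only
      rw [hinner z hz]
      abel
    rw [circleIntegral.integral_congr hrb0.le hCrw] at hJ
    rw [circleIntegral.integral_sub (f := fun z => T • resolvent s z)
        (g := fun z => resolvent s z * X)
        ((continuousOn_const.smul (hcontR hrb0 hrbr)).circleIntegrable hrb0.le)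
        (((hcontR hrb0 hrbr).mul continuousOn_const).circleIntegrable hrb0.le)] at hJ
    rw [circleIntegral.integral_smul T (resolvent s) 0 rb] at hJ
    rw [← circleIntegral_mul (hciR hrb0 hrbr) X] at hJ
    exact (sub_eq_zero.mp hJ).symm

  -- P * B = 0 (unscaled)
  have hPB : (∮ w in C(0,rc), resolvent s w) * (∮ z in C(0,rb), z⁻¹ • resolvent s z) = 0 := by
    set Y := ∮ z in C(0,rb), z⁻¹ • resolvent s z with hY
    set X := ∮ w in C(0,rc), resolvent s w with hX
    have hciY : CircleIntegrable (fun z : ℂ => z⁻¹ • resolvent s z) 0 rb :=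
      hciSmul hrb0 hrbr (hcinv hrb0)
    have hmul : X * Y = ∮ w in C(0,rc), resolvent s w * Y :=
      circleIntegral_mul (hciR hrc0 hrcr) Y
    have hinner : ∀ w ∈ sphere (0:ℂ) rc, resolvent s w * Y
        = (w⁻¹ • Y + w⁻¹ • ∮ z in C(0,rb), (w - z)⁻¹ • resolvent s z) -
          (T * w⁻¹) • resolvent s w := by
      intro w hw
      have hwr := hsphere hrc0 hrcr w hw
      have hwn := mem_sphere_zero_iff_norm.mp hw
      have hw0 := hsph0 hrc0 w hw
      have hwnrb : ‖w‖ ≠ rb := by rw [hwn]; exact hrbc.ne'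
      have h1 : resolvent s w * Y = ∮ z in C(0,rb), resolvent s w * (z⁻¹ • resolvent s z) :=
        mul_circleIntegral hciY _
      have h2 : EqOn (fun z => resolvent s w * (z⁻¹ • resolvent s z))
          (fun z => ((w⁻¹ * z⁻¹) • resolvent s z + (w⁻¹ * (w - z)⁻¹) • resolvent s z)
            - (z⁻¹ * (w - z)⁻¹) • resolvent s w) (sphere 0 rb) := by
        intro z hz
        have hzr := hsphere hrb0 hrbr z hz
        have hzn := mem_sphere_zero_iff_norm.mp hz
        have hz0 := hsph0 hrb0 z hz
        have hzw : z ≠ w := by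
          intro h
          rw [h, hwn] at hzn
          exact hrbc.ne' hzn
        have hwz : w - z ≠ 0 := sub_ne_zero.mpr (Ne.symm hzw)
        have hsplit : z⁻¹ * (w - z)⁻¹ = w⁻¹ * z⁻¹ + w⁻¹ * (w - z)⁻¹ := by
          field_simp
          ring
        simp only
        rw [mul_smul_comm, (commute_resolvent s w z).eq,
          resolvent_mul_resolvent hzr hwr hzw, smul_smul, smul_sub, hsplit, add_smul]
      rw [h1, circleIntegral.integral_congr hrb0.le h2]
      have hi1 : CircleIntegrable (fun z : ℂ => (w⁻¹ * z⁻¹) • resolvent s z) 0 rb :=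
        hciSmul hrb0 hrbr (continuousOn_const.mul (hcinv hrb0))
      have hi2 : CircleIntegrable (fun z : ℂ => (w⁻¹ * (w - z)⁻¹) • resolvent s z) 0 rb :=
        hciSmul hrb0 hrbr (continuousOn_const.mul (hcsub w hwnrb))
      have hi3 : CircleIntegrable (fun z : ℂ => (z⁻¹ * (w - z)⁻¹) • resolvent s w) 0 rb :=
        (((hcinv hrb0).mul (hcsub w hwnrb)).smul continuousOn_const).circleIntegrable hrb0.le
      have hi12 : CircleIntegrable (fun z : ℂ =>
          (w⁻¹ * z⁻¹) • resolvent s z + (w⁻¹ * (w - z)⁻¹) • resolvent s z) 0 rb :=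
        ((((continuousOn_const.mul (hcinv hrb0)).smul (hcontR hrb0 hrbr)).add
          ((continuousOn_const.mul (hcsub w hwnrb)).smul
            (hcontR hrb0 hrbr)))).circleIntegrable hrb0.le
      rw [circleIntegral.integral_sub hi12 hi3, circleIntegral_add hi1 hi2]
      have e1 : (∮ z in C(0,rb), (w⁻¹ * z⁻¹) • resolvent s z) = w⁻¹ • Y := by
        simp only [mul_smul]
        rw [circleIntegral.integral_smul w⁻¹ _ 0 rb]
      have e2 : (∮ z in C(0,rb), (w⁻¹ * (w - z)⁻¹) • resolvent s z)
          = w⁻¹ • ∮ z in C(0,rb), (w - z)⁻¹ • resolvent s z := by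
        simp only [mul_smul]
        rw [circleIntegral.integral_smul w⁻¹ _ 0 rb]
      have e3 : (∮ z in C(0,rb), (z⁻¹ * (w - z)⁻¹) • resolvent s w)
          = (T * w⁻¹) • resolvent s w := by
        rw [circleIntegral.integral_smul_const (fun z : ℂ => z⁻¹ * (w - z)⁻¹)
          (resolvent s w) 0 rb]
        congr 1
        have h4 : EqOn (fun z : ℂ => z⁻¹ * (w - z)⁻¹)
            (fun z : ℂ => w⁻¹ * z⁻¹ + w⁻¹ * (w - z)⁻¹) (sphere 0 rb) := by
          intro z hz
          have hzn := mem_sphere_zero_iff_norm.mp hz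
          have hz0 := hsph0 hrb0 z hz
          have hwz : w - z ≠ 0 := by
            refine sub_ne_zero.mpr (fun h => ?_)
            rw [← h, hwn] at hzn
            exact hrbc.ne' hzn
          simp only
          field_simp
          ring
        rw [circleIntegral.integral_congr hrb0.le h4]
        have hj1 : CircleIntegrable (fun z : ℂ => w⁻¹ * z⁻¹) 0 rb :=
          ((continuousOn_const.mul (hcinv hrb0))).circleIntegrable hrb0.le
        have hj2 : CircleIntegrable (fun z : ℂ => w⁻¹ * (w - z)⁻¹) 0 rb :=
          ((continuousOn_const.mul (hcsub w hwnrb))).circleIntegrable hrb0.le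
        rw [circleIntegral_add hj1 hj2, circleIntegral.integral_const_mul,
          circleIntegral.integral_const_mul, hint_inv hrb0,
          hint_out hrb0.le (by rw [hwn]; exact hrbc)]
        ring
      rw [e1, e2, e3]
    have hJ2 : (∮ w in C(0,rc), w⁻¹ • ∮ z in C(0,rb), (w - z)⁻¹ • resolvent s z) = 0 := by
      have hrw : (fun w : ℂ => w⁻¹ • ∮ z in C(0,rb), (w - z)⁻¹ • resolvent s z)
          = fun w : ℂ => ∮ z in C(0,rb), (w⁻¹ * (w - z)⁻¹) • resolvent s z := by
        funext w
        rw [← circleIntegral.integral_smul w⁻¹ _ 0 rb]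
        simp only [mul_smul]
      rw [hrw]
      have hcont : Continuous fun q : ℝ × ℝ =>
          ((circleMap 0 rc q.1)⁻¹ * (circleMap 0 rc q.1 - circleMap 0 rb q.2)⁻¹) •
            resolvent s (circleMap 0 rb q.2) := by
        refine Continuous.smul (Continuous.mul
          (Continuous.inv₀ ((continuous_circleMap 0 rc).comp continuous_fst)
            (fun q => circleMap_ne_center hrc0.ne'))
          (Continuous.inv₀
            (((continuous_circleMap 0 rc).comp continuous_fst).sub
              ((continuous_circleMap 0 rb).comp continuous_snd))
            (fun q => hcircne hrc0 hrb0 hrbc.ne' q.1 q.2)))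
          ((hcontRcirc hrb0 hrbr).comp continuous_snd)
      rw [circleIntegral_swap (F := fun w z => (w⁻¹ * (w - z)⁻¹) • resolvent s z) hcont]
      have hz0 : ∀ z ∈ sphere (0:ℂ) rb,
          (∮ w in C(0,rc), (w⁻¹ * (w - z)⁻¹) • resolvent s z) = (0:A) := by
        intro z hz
        have hzn := mem_sphere_zero_iff_norm.mp hz
        have hz0' := hsph0 hrb0 z hz
        rw [circleIntegral.integral_smul_const (fun w : ℂ => w⁻¹ * (w - z)⁻¹)
          (resolvent s z) 0 rc]
        have h5 : EqOn (fun w : ℂ => w⁻¹ * (w - z)⁻¹)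
            (fun w : ℂ => z⁻¹ * (w - z)⁻¹ - z⁻¹ * w⁻¹) (sphere 0 rc) := by
          intro w hw
          have hwn := mem_sphere_zero_iff_norm.mp hw
          have hw0 := hsph0 hrc0 w hw
          have hwz : w - z ≠ 0 := by
            refine sub_ne_zero.mpr (fun h => ?_)
            rw [h, hzn] at hwn
            exact hrbc.ne hwn
          simp only
          field_simp
          ring
        rw [circleIntegral.integral_congr hrc0.le h5]
        have hznrc : ‖z‖ ≠ rc := by rw [hzn]; exact hrbc.ne
        have hj1 : CircleIntegrable (fun w : ℂ => z⁻¹ * (w - z)⁻¹) 0 rc :=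
          (continuousOn_const.mul (hcsub2 z hznrc)).circleIntegrable hrc0.le
        have hj2 : CircleIntegrable (fun w : ℂ => z⁻¹ * w⁻¹) 0 rc :=
          (continuousOn_const.mul (hcinv hrc0)).circleIntegrable hrc0.le
        rw [circleIntegral.integral_sub hj1 hj2, circleIntegral.integral_const_mul,
          circleIntegral.integral_const_mul, hint_inv hrc0,
          hint_in (show ‖z‖ < rc by rw [hzn]; exact hrbc)]
        simp [zero_smul]
      rw [circleIntegral.integral_congr hrb0.le hz0, hzero]
    have hCrw2 : EqOn (fun w : ℂ => w⁻¹ • ∮ z in C(0,rb), (w - z)⁻¹ • resolvent s z)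
        (fun w => (resolvent s w * Y + (T * w⁻¹) • resolvent s w) - w⁻¹ • Y)
        (sphere 0 rc) := by
      intro w hw
      simp only
      rw [hinner w hw]
      abel
    rw [circleIntegral.integral_congr hrc0.le hCrw2] at hJ2
    have hk1 : CircleIntegrable (fun w : ℂ => resolvent s w * Y) 0 rc :=
      ((hcontR hrc0 hrcr).mul continuousOn_const).circleIntegrable hrc0.le
    have hk2 : CircleIntegrable (fun w : ℂ => (T * w⁻¹) • resolvent s w) 0 rc :=
      hciSmul hrc0 hrcr (continuousOn_const.mul (hcinv hrc0))
    have hk3 : CircleIntegrable (fun w : ℂ => w⁻¹ • Y) 0 rc :=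
      ((hcinv hrc0).smul continuousOn_const).circleIntegrable hrc0.le
    have hk12 : CircleIntegrable (fun w : ℂ =>
        resolvent s w * Y + (T * w⁻¹) • resolvent s w) 0 rc :=
      (((hcontR hrc0 hrcr).mul continuousOn_const).add
        ((continuousOn_const.mul (hcinv hrc0)).smul (hcontR hrc0 hrcr))).circleIntegrable hrc0.le
    rw [circleIntegral.integral_sub hk12 hk3, circleIntegral_add hk1 hk2] at hJ2
    rw [← circleIntegral_mul (hciR hrc0 hrcr) Y] at hJ2
    have e4 : (∮ w in C(0,rc), (T * w⁻¹) • resolvent s w) = T • Y := by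
      simp only [mul_smul]
      rw [circleIntegral.integral_smul T _ 0 rc]
      rw [hY, hBind hrc0 hrb0 hrcr hrbr]
    have e5 : (∮ w in C(0,rc), w⁻¹ • Y) = T • Y := by
      rw [circleIntegral.integral_smul_const (fun w : ℂ => w⁻¹) Y 0 rc, hint_inv hrc0]
    rw [e4, e5] at hJ2
    calc X * Y = X * Y + T • Y - T • Y := by abel
      _ = 0 := hJ2

  -- B and P commute (unscaled)
  have hBPc : (∮ z in C(0,rb), z⁻¹ • resolvent s z) * (∮ w in C(0,rc), resolvent s w)
      = (∮ w in C(0,rc), resolvent s w) * (∮ z in C(0,rb), z⁻¹ • resolvent s z) := by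
    refine circleIntegral_mul_circleIntegral_comm (hciSmul hrb0 hrbr (hcinv hrb0))
      (hciR hrc0 hrcr) (fun z w => ?_) ?_
    · rw [smul_mul_assoc, mul_smul_comm, (commute_resolvent s z w).eq]
    · exact Continuous.mul (Continuous.smul
        (Continuous.inv₀ ((continuous_circleMap 0 rb).comp continuous_fst)
          (fun q => circleMap_ne_center hrb0.ne'))
        ((hcontRcirc hrb0 hrbr).comp continuous_fst))
        ((hcontRcirc hrc0 hrcr).comp continuous_snd)
  -- convert everything to radius rb
  have hind := hPind hrb0 hrc0 hrbr hrcr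
  rw [← hind] at hPP hPB hBPc
  have hBPz : (∮ z in C(0,rb), z⁻¹ • resolvent s z) * (∮ z in C(0,rb), resolvent s z) = 0 :=
    hBPc.trans hPB
  -- the candidate inverse
  set P : A := T⁻¹ • ∮ z in C(0,rb), resolvent s z with hPdef
  set B : A := -(T⁻¹ • ∮ z in C(0,rb), z⁻¹ • resolvent s z) with hBdef
  have hsB' : s * B = 1 - P := by
    rw [hBdef, hPdef, mul_neg, mul_smul_comm, hsB hrb0 hrbr, smul_sub, smul_smul,
      inv_mul_cancel₀ hT, one_smul, neg_sub]
  have hBs' : B * s = s * B := by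
    rw [hBdef, neg_mul, mul_neg, smul_mul_assoc, mul_smul_comm, hBs hrb0 hrbr]
  have hPidem : P * P = P := by
    rw [hPdef, smul_mul_assoc, mul_smul_comm, hPP, smul_smul, smul_smul,
      mul_assoc, inv_mul_cancel₀ hT, mul_one]
  have hPB2 : P * B = 0 := by
    rw [hPdef, hBdef, mul_neg, smul_mul_assoc, mul_smul_comm, hPB, smul_zero, smul_zero,
      neg_zero]
  have hPs' : P * s = s * P := by
    rw [hPdef, smul_mul_assoc, mul_smul_comm, hPs hrb0 hrbr]
  have h1msB : 1 - s * B = P := by rw [hsB', sub_sub_cancel]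
  refine ⟨B, hBs'.symm, ?_, ?_⟩
  · rw [hBs'.trans hsB', sub_mul, one_mul, hPB2, sub_zero]
  · intro μ hμ
    rw [h1msB]
    -- choose a radius smaller than ‖μ‖
    have hμn : 0 < ‖μ‖ := norm_pos_iff.mpr hμ
    set r' : ℝ := min r₀ ‖μ‖ / 2 with hr'def
    have hr'0 : 0 < r' := by
      rw [hr'def]
      have := lt_min hr₀ hμn
      positivity
    have hr'r : r' < r₀ := by
      rw [hr'def]
      have h := min_le_left r₀ ‖μ‖
      linarith
    have hr'μ : r' < ‖μ‖ := by
      rw [hr'def]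
      have h := min_le_right r₀ ‖μ‖
      linarith
    have hμr' : ‖μ‖ ≠ r' := hr'μ.ne'
    set c0 : A := ∮ z in C(0,r'), (μ - z)⁻¹ • resolvent s z with hc0def
    have hcic0 : CircleIntegrable (fun z : ℂ => (μ - z)⁻¹ • resolvent s z) 0 r' :=
      hciSmul hr'0 hr'r (hcsub μ hμr')
    have E3 : (μ • (1:A) - s) * c0 = ∮ z in C(0,rb), resolvent s z := by
      rw [hc0def, mul_circleIntegral hcic0 _]
      have hcg : EqOn (fun z : ℂ => (μ • (1:A) - s) * ((μ - z)⁻¹ • resolvent s z))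
          (fun z : ℂ => resolvent s z + (μ - z)⁻¹ • (1:A)) (sphere 0 r') := by
        intro z hz
        have hzr := hsphere hr'0 hr'r z hz
        have hzn := mem_sphere_zero_iff_norm.mp hz
        have hμz : μ - z ≠ 0 := by
          refine sub_ne_zero.mpr (fun h => ?_)
          rw [← h] at hzn
          exact hr'μ.ne' hzn
        simp only
        rw [mul_smul_comm, smul_sub_mul_resolvent μ hzr, smul_add, smul_smul,
          inv_mul_cancel₀ hμz, one_smul]
      rw [circleIntegral.integral_congr hr'0.le hcg,
        circleIntegral_add (g := fun z => (μ - z)⁻¹ • (1:A)) (hciR hr'0 hr'r)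
          (((hcsub μ hμr').smul continuousOn_const).circleIntegrable hr'0.le),
        circleIntegral.integral_smul_const (fun z : ℂ => (μ - z)⁻¹) (1:A) 0 r',
        hint_out hr'0.le hr'μ, zero_smul, add_zero]
      exact hPind hr'0 hrb0 hr'r hrbr
    have E3' : c0 * (μ • (1:A) - s) = (μ • (1:A) - s) * c0 := by
      rw [hc0def, circleIntegral_mul hcic0, mul_circleIntegral hcic0]
      congr 1
      funext z
      rw [smul_mul_assoc, mul_smul_comm, (commute_resolvent_sub s μ z).eq]
    have hc0P : c0 * (∮ z in C(0,rb), resolvent s z)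
        = (∮ z in C(0,rb), resolvent s z) * c0 := by
      rw [hc0def]
      refine circleIntegral_mul_circleIntegral_comm hcic0 (hciR hrb0 hrbr)
        (fun z w => ?_) ?_
      · rw [smul_mul_assoc, mul_smul_comm, (commute_resolvent s z w).eq]
      · refine Continuous.mul (Continuous.smul (Continuous.inv₀
          (continuous_const.sub ((continuous_circleMap 0 r').comp continuous_fst)) ?_)
          ((hcontRcirc hr'0 hr'r).comp continuous_fst))
          ((hcontRcirc hrb0 hrbr).comp continuous_snd)
        intro q
        refine sub_ne_zero.mpr (fun h => ?_)
        have := congrArg norm h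
        rw [norm_circleMap_zero,
          abs_of_pos hr'0] at this
        exact hr'μ.ne' this
    have hc0s : c0 * s = s * c0 := by
      rw [hc0def, circleIntegral_mul hcic0, mul_circleIntegral hcic0]
      congr 1
      funext z
      rw [smul_mul_assoc, mul_smul_comm, (commute_resolvent_self s z).eq]
    -- scaled
    set c : A := T⁻¹ • c0 with hcdef
    have hPc' : (μ • (1:A) - s) * c = P := by
      rw [hcdef, mul_smul_comm, E3]
    have hcP' : c * (μ • (1:A) - s) = P := by
      calc c * (μ • (1:A) - s) = T⁻¹ • (c0 * (μ • (1:A) - s)) := by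
            simp only [hcdef, smul_mul_assoc]
        _ = T⁻¹ • ((μ • (1:A) - s) * c0) := by rw [E3']
        _ = T⁻¹ • ∮ z in C(0,rb), resolvent s z := by rw [E3]
        _ = P := hPdef.symm
    have hccommP : c * P = P * c := by
      rw [hcdef, hPdef, smul_mul_assoc, smul_mul_assoc, mul_smul_comm, mul_smul_comm, hc0P]
    have hccomms : c * s = s * c := by
      rw [hcdef, smul_mul_assoc, mul_smul_comm, hc0s]
    set d : A := c * P + μ⁻¹ • (1 - P) with hddef
    have key_cP : (μ • (1:A) - s * P) * (c * P) = P := by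
      have h1 : (s * P) * (c * P) = (s * c) * P := by
        calc (s*P)*(c*P) = s*(P*(c*P)) := by rw [mul_assoc]
          _ = s*((P*c)*P) := by rw [← mul_assoc P c P]
          _ = s*((c*P)*P) := by rw [← hccommP]
          _ = s*(c*(P*P)) := by rw [mul_assoc c P P]
          _ = s*(c*P) := by rw [hPidem]
          _ = (s*c)*P := by rw [← mul_assoc]
      calc (μ • (1:A) - s * P) * (c * P)
          = (μ • (1:A)) * (c * P) - (s * P) * (c * P) := sub_mul _ _ _
        _ = (μ • c) * P - (s * c) * P := by
            rw [smul_mul_assoc μ (1:A) (c * P), one_mul, h1, smul_mul_assoc μ c P]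
        _ = (μ • c - s * c) * P := by rw [sub_mul]
        _ = ((μ • (1:A) - s) * c) * P := by
            rw [sub_mul (μ • (1:A)) s c, smul_mul_assoc μ (1:A) c, one_mul]
        _ = P * P := by rw [hPc']
        _ = P := hPidem
    have key_1P : (μ • (1:A) - s * P) * (μ⁻¹ • (1 - P)) = 1 - P := by
      have h2 : (μ • (1:A) - s * P) * (1 - P) = μ • (1 - P) := by
        calc (μ • (1:A) - s * P) * (1 - P)
            = (μ • (1:A)) * (1 - P) - (s * P) * (1 - P) := sub_mul _ _ _
          _ = μ • (1 - P) - (s * P - s * (P * P)) := by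
              rw [smul_mul_assoc μ (1:A) (1 - P), one_mul, mul_sub (s * P), mul_one,
                mul_assoc]
          _ = μ • (1 - P) := by rw [hPidem, sub_self, sub_zero]
      rw [mul_smul_comm, h2, smul_smul, inv_mul_cancel₀ hμ, one_smul]
    have right : (μ • (1:A) - s * P) * d = 1 := by
      rw [hddef, mul_add, key_cP, key_1P]
      abel
    have hCd : Commute (μ • (1:A) - s * P) d := by
      have hCsc : Commute s c := hccomms.symm
      have hCsP : Commute s P := hPs'.symm
      have hCPc : Commute P c := hccommP.symm
      have hCsPcP : Commute (s * P) (c * P) :=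
        Commute.mul_left (Commute.mul_right hCsc hCsP) (Commute.mul_right hCPc (Commute.refl P))
      have hCsP1P : Commute (s * P) (1 - P) :=
        Commute.sub_right (Commute.one_right _)
          (Commute.mul_left hCsP (Commute.refl P))
      exact Commute.sub_left ((Commute.one_left d).smul_left μ)
        (Commute.add_right hCsPcP (hCsP1P.smul_right μ⁻¹))
    have left : d * (μ • (1:A) - s * P) = 1 := by
      rw [← hCd.eq]
      exact right
    exact ⟨⟨μ • (1:A) - s * P, d, right, left⟩, rfl⟩

end Koliha

section Final

lemma real_aux {x y : ℝ} (hx : 0 ≤ x) (h : x < (y + 1)⁻¹) (hy : 0 ≤ y) : x * y < 1 := by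
  have hp : (0:ℝ) < y + 1 := by positivity
  calc x * y ≤ x * (y + 1) := by nlinarith
    _ < (y + 1)⁻¹ * (y + 1) := mul_lt_mul_of_pos_right h hp
    _ = 1 := inv_mul_cancel₀ hp.ne'

theorem stmt_7 {A : Type*} [NormedRing A] [NormedAlgebra ℂ A] [CompleteSpace A]
    (x₁ x₂ x₃ : A) (α₁ α₂ β : ℂ) (hβ : β ≠ 0)
    (h1 : x₁ * x₂ + x₁ * x₃ + x₂ * x₃ = α₁ • (1 : A) + α₂ • (x₁ + x₂ + x₃))
    (h2 : x₁ * x₂ * x₃ = β • (x₁ + x₂ + x₃))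
    (g1 : GDrazinInvertible x₁) (g2 : GDrazinInvertible x₂) (g3 : GDrazinInvertible x₃) :
    GDrazinInvertible (x₁ + x₂ + x₃) := by
  classical
  obtain ⟨b₁, hc1, hi1, hq1⟩ := (g1 : ∃ b : A, x₁ * b = b * x₁ ∧ b * x₁ * b = b ∧
    spectralRadius ℂ (x₁ * (1 - x₁ * b)) = 0)
  obtain ⟨b₂, hc2, hi2, hq2⟩ := (g2 : ∃ b : A, x₂ * b = b * x₂ ∧ b * x₂ * b = b ∧
    spectralRadius ℂ (x₂ * (1 - x₂ * b)) = 0)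
  obtain ⟨b₃, hc3, hi3, hq3⟩ := (g3 : ∃ b : A, x₃ * b = b * x₃ ∧ b * x₃ * b = b ∧
    spectralRadius ℂ (x₃ * (1 - x₃ * b)) = 0)
  set S : A := x₁ + x₂ + x₃ with hSdef
  -- punctured resolvent neighborhoods for each xᵢ
  have hx1 := isolated_of_gdrazin hc1 hi1
    (fun μ hμ => isUnit_smul_one_sub_of_spectralRadius_zero hq1 hμ)
  have hx2 := isolated_of_gdrazin hc2 hi2
    (fun μ hμ => isUnit_smul_one_sub_of_spectralRadius_zero hq2 hμ)
  have hx3 := isolated_of_gdrazin hc3 hi3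
    (fun μ hμ => isUnit_smul_one_sub_of_spectralRadius_zero hq3 hμ)
  -- radius where the quadratic denominator does not vanish
  obtain ⟨r₄, hr₄, hq4⟩ : ∃ δ, 0 < δ ∧ ∀ lam : ℂ, ‖lam‖ < δ → lam^2 - α₂*lam + β ≠ 0 := by
    have hcq : ContinuousAt (fun lam : ℂ => lam^2 - α₂*lam + β) 0 := by fun_prop
    obtain ⟨δ, hδ, hδ'⟩ := Metric.continuousAt_iff.mp hcq ‖β‖ (norm_pos_iff.mpr hβ)
    refine ⟨δ, hδ, fun lam hlam h0 => ?_⟩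
    have hd : dist lam 0 < δ := by simpa [dist_zero_right] using hlam
    have h5 := hδ' hd
    rw [h0] at h5
    have h00 : (0:ℂ)^2 - α₂*0 + β = β := by ring
    rw [h00, dist_zero_left] at h5
    exact lt_irrefl _ h5
  set r : ℝ := min (min (‖b₁‖+1)⁻¹ (‖b₂‖+1)⁻¹) (min (‖b₃‖+1)⁻¹ r₄) with hrdef
  have hr : 0 < r := by
    refine lt_min (lt_min ?_ ?_) (lt_min ?_ hr₄) <;> positivity
  -- the key unit for small nonzero lam
  have key : ∀ lam : ℂ, lam ≠ 0 → ‖lam‖ < r →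
      IsUnit ((lam^2 - α₂*lam + β) • S - (lam^3 + α₁*lam) • (1:A)) := by
    intro lam hlam hlamr
    have hb1 : ‖lam‖ * ‖b₁‖ < 1 := real_aux (norm_nonneg _)
      (lt_of_lt_of_le hlamr ((min_le_left _ _).trans (min_le_left _ _))) (norm_nonneg _)
    have hb2 : ‖lam‖ * ‖b₂‖ < 1 := real_aux (norm_nonneg _)
      (lt_of_lt_of_le hlamr ((min_le_left _ _).trans (min_le_right _ _))) (norm_nonneg _)
    have hb3 : ‖lam‖ * ‖b₃‖ < 1 := real_aux (norm_nonneg _)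
      (lt_of_lt_of_le hlamr ((min_le_right _ _).trans (min_le_left _ _))) (norm_nonneg _)
    have u1 : IsUnit (x₁ - lam • (1:A)) := by
      have := (hx1 lam hlam hb1).neg
      rwa [neg_sub] at this
    have u2 : IsUnit (x₂ - lam • (1:A)) := by
      have := (hx2 lam hlam hb2).neg
      rwa [neg_sub] at this
    have u3 : IsUnit (x₃ - lam • (1:A)) := by
      have := (hx3 lam hlam hb3).neg
      rwa [neg_sub] at this
    have hexp : (x₁ - lam • (1:A)) * (x₂ - lam • (1:A)) * (x₃ - lam • (1:A))
        = (lam^2 - α₂*lam + β) • S - (lam^3 + α₁*lam) • (1:A) := by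
      have expand : (x₁ - lam • (1:A)) * (x₂ - lam • (1:A)) * (x₃ - lam • (1:A))
          = x₁*x₂*x₃ - lam • (x₁*x₂ + x₁*x₃ + x₂*x₃) + (lam^2) • (x₁+x₂+x₃) - (lam^3) • (1:A) := by
        simp only [mul_sub, sub_mul, smul_mul_assoc, mul_smul_comm, one_mul, mul_one,
          smul_sub, smul_add, smul_smul]
        module
      rw [expand, h1, h2, ← hSdef]
      module
    rw [← hexp]
    exact (u1.mul u2).mul u3
  -- the rational map
  set f : ℂ → ℂ := fun lam => (lam^3 + α₁*lam) / (lam^2 - α₂*lam + β) with hfdef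
  have hf0 : f 0 = 0 := by
    simp only [hfdef]
    norm_num
  have hanal : AnalyticAt ℂ f 0 := by
    refine AnalyticAt.div ?_ ?_ (by norm_num [hβ])
    · exact (analyticAt_id.pow 3).add (analyticAt_const.mul analyticAt_id)
    · exact ((analyticAt_id.pow 2).sub (analyticAt_const.mul analyticAt_id)).add analyticAt_const
  have hnc : ¬ (∀ᶠ lam in nhds (0:ℂ), f lam = f 0) := by
    intro h
    rw [hf0] at h
    obtain ⟨δ, hδ, hδ'⟩ := Metric.eventually_nhds_iff.mp h
    set t : ℝ := min δ r / 2 with htdef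
    have ht0 : 0 < t := by
      have := lt_min hδ hr
      rw [htdef]
      positivity
    have htδ : t < δ := by
      have := min_le_left δ r
      rw [htdef]; linarith
    have htr : t < r := by
      have := min_le_right δ r
      rw [htdef]; linarith
    have hzero : ∀ u : ℝ, 0 < u → u < δ → u < r → ((u:ℂ))^2 = -α₁ := by
      intro u hu huδ hur
      have hnorm : ‖(u:ℂ)‖ = u := by
        rw [Complex.norm_real, Real.norm_eq_abs, abs_of_pos hu]
      have hfu : f u = 0 := hδ' (by rw [dist_zero_right, hnorm]; exact huδ)
      have hden : (u:ℂ)^2 - α₂*u + β ≠ 0 := by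
        refine hq4 _ ?_
        rw [hnorm]
        exact lt_of_lt_of_le hur (by rw [hrdef]; exact (min_le_right _ _).trans (min_le_right _ _))
      rw [hfdef] at hfu
      simp only [div_eq_zero_iff] at hfu
      rcases hfu with hnum | hd
      · have : (u:ℂ) * ((u:ℂ)^2 + α₁) = 0 := by rw [← hnum]; ring
        rcases mul_eq_zero.mp this with h0 | h0
        · exact absurd h0 (by exact_mod_cast hu.ne')
        · exact eq_neg_of_add_eq_zero_left h0
      · exact absurd hd hden
    have e1 := hzero t ht0 htδ htr
    have e2 := hzero (t/2) (by positivity) (by linarith) (by linarith)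
    rw [← e1] at e2
    have : ((t:ℂ))^2 = ((t/2 : ℝ):ℂ)^2 := e2.symm
    have hre : t^2 = (t/2)^2 := by exact_mod_cast this
    nlinarith
  rcases hanal.eventually_constant_or_nhds_le_map_nhds with hconst | hmap
  · exact absurd hconst hnc
  -- open mapping gives a punctured resolvent neighborhood of 0 for S
  rw [hf0] at hmap
  have himg : f '' (Metric.ball 0 r) ∈ nhds (0:ℂ) :=
    hmap (Filter.image_mem_map (Metric.ball_mem_nhds _ hr))
  obtain ⟨ε, hε, hball⟩ := Metric.mem_nhds_iff.mp himg
  have HS : ∀ μ : ℂ, μ ≠ 0 → ‖μ‖ < ε → μ ∈ resolventSet ℂ S := by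
    intro μ hμ hμε
    obtain ⟨lam, hlamr, hflam⟩ := hball (by rwa [Metric.mem_ball, dist_zero_right])
    rw [Metric.mem_ball, dist_zero_right] at hlamr
    have hlam0 : lam ≠ 0 := by
      intro h
      rw [h, hf0] at hflam
      exact hμ hflam.symm
    have hden : lam^2 - α₂*lam + β ≠ 0 := by
      refine hq4 _ (lt_of_lt_of_le hlamr ?_)
      rw [hrdef]
      exact (min_le_right _ _).trans (min_le_right _ _)
    have hu := key lam hlam0 hlamr
    have hrepr : S - μ • (1:A)
        = (lam^2 - α₂*lam + β)⁻¹ • ((lam^2 - α₂*lam + β) • S - (lam^3 + α₁*lam) • (1:A)) := by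
      rw [smul_sub, smul_smul, smul_smul, inv_mul_cancel₀ hden, one_smul]
      congr 1
      rw [← hflam, hfdef]
      simp only
      rw [div_eq_inv_mul]
    have hsu : IsUnit (S - μ • (1:A)) := by
      rw [hrepr]
      have hsc : IsUnit ((lam^2 - α₂*lam + β)⁻¹ • (1:A)) := by
        rw [← Algebra.algebraMap_eq_smul_one]
        exact (isUnit_iff_ne_zero.mpr (inv_ne_zero hden)).map (algebraMap ℂ A)
      have : (lam^2 - α₂*lam + β)⁻¹ • ((lam^2 - α₂*lam + β) • S - (lam^3 + α₁*lam) • (1:A))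
          = ((lam^2 - α₂*lam + β)⁻¹ • (1:A)) * ((lam^2 - α₂*lam + β) • S - (lam^3 + α₁*lam) • (1:A)) := by
        rw [smul_mul_assoc, one_mul]
      rw [this]
      exact hsc.mul hu
    rw [spectrum.mem_resolventSet_iff, Algebra.algebraMap_eq_smul_one]
    have := hsu.neg
    rwa [neg_sub] at this
  obtain ⟨b, hb1, hb2, hb3⟩ := gdrazin_of_isolated hε HS
  exact ⟨b, hb1, hb2, spectralRadius_eq_zero_of_forall_isUnit (fun μ hμ => hb3 μ hμ)⟩

end Final
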